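/- Let A \subseteq B be an extension of commutative rings and let M be a finitely generated flat A-module. If M \otimes_A B is projective as a B-module, then M is projective as an A-module. -/

import Mathlib

open TensorProduct

/-- A finitely generated submodule of a span is contained in the span of a finite
subset of the spanning set; strengthened to the case where the submodule equals the span. -/
lemma aux_exists_finset_span {R M : Type*} [Semiring R] [AddCommMonoid M] [Module R M]
    {S : Set M} (h : (Submodule.span R S).FG) :
    ∃ T : Finset M, ↑T ⊆ S ∧ Submodule.span R (T : Set M) = Submodule.span R S := by
  classical
  obtain ⟨G, hG⟩ := h
  have key : ∀ x ∈ G, ∃ T : Finset M, ↑T ⊆ S ∧ x ∈ Submodule.span R (T : Set M) := by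
    intro x hx
    exact Submodule.mem_span_finite_of_mem_span (hG ▸ Submodule.subset_span hx)
  choose T hTS hTmem using key
  refine ⟨G.attach.biUnion (fun x => T x.1 x.2), ?_, ?_⟩
  · intro y hy
    simp only [Finset.coe_biUnion, Set.mem_iUnion, Finset.mem_coe] at hy
    obtain ⟨x, -, hy⟩ := hy
    exact hTS _ _ hy
  · refine le_antisymm (Submodule.span_le.mpr ?_) ?_
    · intro y hy
      simp only [Finset.coe_biUnion, Set.mem_iUnion, Finset.mem_coe] at hy
      obtain ⟨x, -, hy⟩ := hy
      exact Submodule.subset_span (hTS _ _ hy)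
    · rw [← hG]
      refine Submodule.span_le.mpr fun x hx => ?_
      refine Submodule.span_mono ?_ (hTmem x hx)
      intro y hy
      simp only [Finset.coe_biUnion, Set.mem_iUnion, Finset.mem_coe]
      exact ⟨⟨x, hx⟩, Finset.mem_attach _ _, hy⟩

/-- If `A → B` is injective, then `x ↦ 1 ⊗ x : (ι →₀ A) → B ⊗[A] (ι →₀ A)` is injective. -/
lemma aux_one_tmul_injective {A B : Type*} [CommRing A] [CommRing B] [Algebra A B]
    (hinj : Function.Injective (algebraMap A B)) (ι : Type*) :
    Function.Injective (fun x : ι →₀ A => (1 : B) ⊗ₜ[A] x) := by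
  classical
  intro x y hxy
  have := congrArg (TensorProduct.finsuppScalarRight A A B ι) hxy
  ext i
  apply hinj
  have h := congrFun (congrArg DFunLike.coe this) i
  simpa [TensorProduct.finsuppScalarRight_apply_tmul_apply,
    Algebra.algebraMap_eq_smul_one] using h

set_option maxHeartbeats 1000000 in
/-- If `A ⊆ B` is a ring extension, `M` a finitely generated flat `A`-module, and
`M ⊗_A B` is `B`-projective, then `M` is `A`-projective. -/
theorem projective_of_baseChange_projective
    (A B M : Type*) [CommRing A] [CommRing B] [Algebra A B]
    (hinj : Function.Injective (algebraMap A B))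
    [AddCommGroup M] [Module A M] [Module.Finite A M] [Module.Flat A M]
    (hproj : Module.Projective B (B ⊗[A] M)) :
    Module.Projective A M := by
  classical
  -- choose a finite presentation surjection π : (Fin n → A) → M
  obtain ⟨n, π, hπ⟩ := Module.Finite.exists_fin' A M
  obtain ⟨K, hK⟩ : ∃ K : Submodule A (Fin n → A), K = LinearMap.ker π := ⟨_, rfl⟩
  have e : ((Fin n → A) ⧸ K) ≃ₗ[A] M := by
    rw [hK]
    exact π.quotKerEquivOfSurjective hπ
  haveI hQflat : Module.Flat A ((Fin n → A) ⧸ K) :=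
    Module.Flat.of_linearEquiv e
  haveI hQproj : Module.Projective B (B ⊗[A] ((Fin n → A) ⧸ K)) :=
    Module.Projective.of_equiv
      (LinearEquiv.baseChange (R := A) (A := B) (M := (Fin n → A) ⧸ K) (N := M) e).symm
  -- base change of the quotient map
  obtain ⟨g, hg⟩ : ∃ g' : B ⊗[A] (Fin n → A) →ₗ[B] B ⊗[A] ((Fin n → A) ⧸ K),
      g' = K.mkQ.baseChange B := ⟨_, rfl⟩
  have hgsurj : Function.Surjective g := by
    rw [hg]
    exact LinearMap.lTensor_surjective B (Submodule.mkQ_surjective K)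
  -- the kernel of g is a finitely generated B-submodule
  obtain ⟨σ, hσ⟩ := Module.projective_lifting_property g LinearMap.id hgsurj
  have hkerfg : (LinearMap.ker g).FG := by
    obtain ⟨p, hp⟩ : ∃ p : B ⊗[A] (Fin n → A) →ₗ[B] B ⊗[A] (Fin n → A),
        p = LinearMap.id - σ ∘ₗ g := ⟨_, rfl⟩
    have hrange : LinearMap.ker g = LinearMap.range p := by
      apply le_antisymm
      · intro x hx
        refine ⟨x, ?_⟩
        rw [hp]
        simp only [LinearMap.sub_apply, LinearMap.id_apply, LinearMap.coe_comp,
          Function.comp_apply, LinearMap.mem_ker.mp hx, map_zero, sub_zero]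
      · rintro _ ⟨x, rfl⟩
        rw [hp]
        simp only [LinearMap.mem_ker, LinearMap.sub_apply, LinearMap.id_apply,
          LinearMap.coe_comp, Function.comp_apply, map_sub]
        rw [← LinearMap.comp_apply g σ, ← LinearMap.comp_apply]
        rw [hσ]
        simp
    rw [hrange, ← Submodule.map_top]
    have htop : (⊤ : Submodule B (B ⊗[A] (Fin n → A))).FG := Module.finite_def.mp inferInstance
    exact Submodule.FG.map p htop
  -- kernel of g equals the B-span of the image of K
  have hks : LinearMap.ker g =
      Submodule.span B (Set.range fun k : K => (1 : B) ⊗ₜ[A] (k : Fin n → A)) := by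
    have hexact : Function.Exact (K.subtype.baseChange B) (K.mkQ.baseChange B) :=
      lTensor_exact B (LinearMap.exact_subtype_mkQ K) (Submodule.mkQ_surjective K)
    rw [LinearMap.exact_iff] at hexact
    apply le_antisymm
    · intro x hx
      have hx' : x ∈ LinearMap.range (K.subtype.baseChange B) := by
        rw [← hexact]
        rw [hg] at hx
        exact hx
      obtain ⟨t, ht⟩ := hx'
      rw [← ht]
      clear ht hx
      induction t using TensorProduct.induction_on with
      | zero => simp
      | tmul b k =>
          have hbk : K.subtype.baseChange B (b ⊗ₜ[A] k)
              = b • ((1 : B) ⊗ₜ[A] (k : Fin n → A)) := by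
            rw [LinearMap.baseChange_tmul, TensorProduct.smul_tmul', smul_eq_mul, mul_one]
            rfl
          rw [hbk]
          exact Submodule.smul_mem _ b (Submodule.subset_span ⟨k, rfl⟩)
      | add u v hu hv =>
          rw [map_add]
          exact Submodule.add_mem _ hu hv
    · rw [Submodule.span_le]
      rintro _ ⟨k, rfl⟩
      simp only [SetLike.mem_coe, LinearMap.mem_ker, hg]
      rw [LinearMap.baseChange_tmul]
      have hk0 : K.mkQ (k : Fin n → A) = 0 := by
        rw [Submodule.mkQ_apply, Submodule.Quotient.mk_eq_zero]
        exact k.2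
      rw [hk0, TensorProduct.tmul_zero]
  -- extract a finite spanning subset coming from K
  rw [hks] at hkerfg
  obtain ⟨T, hTS, hTspan⟩ := aux_exists_finset_span hkerfg
  have hc : ∀ t : T, ∃ k : K, (1 : B) ⊗ₜ[A] (k : Fin n → A) = (t : B ⊗[A] (Fin n → A)) :=
    fun t => hTS t.2
  choose c hc using hc
  -- the finitely generated submodule K₀ of K
  obtain ⟨K₀, hK₀⟩ : ∃ K₀ : Submodule A (Fin n → A),
      K₀ = Submodule.span A (Set.range fun t : T => ((c t : K) : Fin n → A)) := ⟨_, rfl⟩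
  have hK₀K : K₀ ≤ K := by
    rw [hK₀, Submodule.span_le]
    rintro _ ⟨t, rfl⟩
    exact (c t).2
  haveI hTfin : Finite { x // x ∈ T } := inferInstance
  haveI : Module.Finite A K₀ := by
    rw [hK₀]
    exact Module.Finite.iff_fg.mpr (Submodule.fg_span (Set.finite_range _))
  -- apply the equational criterion for flatness
  have hcomp : K.mkQ ∘ₗ K₀.subtype = 0 := by
    refine LinearMap.ext fun x => ?_
    simp only [LinearMap.coe_comp, Function.comp_apply, Submodule.coe_subtype,
      Submodule.mkQ_apply, LinearMap.zero_apply, Submodule.Quotient.mk_eq_zero]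
    exact hK₀K x.2
  obtain ⟨κ, a, y, hya, ha0⟩ :=
    Module.Flat.exists_factorization_of_comp_eq_zero_of_free (R := A)
      (M := (Fin n → A) ⧸ K) (K := K₀) (N := Fin n → A)
      (f := K₀.subtype) (x := K.mkQ) hcomp
  -- a vanishes on all of K
  have haK : ∀ x ∈ K, a x = 0 := by
    intro k hk
    have h1 : ((1 : B) ⊗ₜ[A] k : B ⊗[A] (Fin n → A)) ∈ LinearMap.ker g := by
      simp only [LinearMap.mem_ker, hg]
      rw [LinearMap.baseChange_tmul]
      have hk0 : K.mkQ k = 0 := by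
        rw [Submodule.mkQ_apply, Submodule.Quotient.mk_eq_zero]; exact hk
      rw [hk0, TensorProduct.tmul_zero]
    rw [hks, ← hTspan] at h1
    have h2 : Submodule.span B (T : Set (B ⊗[A] (Fin n → A)))
        ≤ LinearMap.ker (a.baseChange B) := by
      rw [Submodule.span_le]
      intro t ht
      simp only [SetLike.mem_coe, LinearMap.mem_ker]
      have ht' : ((1 : B) ⊗ₜ[A] ((c ⟨t, ht⟩ : K) : Fin n → A) : B ⊗[A] (Fin n → A))
          = t := hc ⟨t, ht⟩
      rw [← ht', LinearMap.baseChange_tmul]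
      have hat : a ((c ⟨t, ht⟩ : K) : Fin n → A) = 0 := by
        have hmem : ((c ⟨t, ht⟩ : K) : Fin n → A) ∈ K₀ := by
          rw [hK₀]
          exact Submodule.subset_span ⟨⟨t, ht⟩, rfl⟩
        have h5 := LinearMap.congr_fun ha0 ⟨((c ⟨t, ht⟩ : K) : Fin n → A), hmem⟩
        simpa using h5
      rw [hat, TensorProduct.tmul_zero]
    have h3 : ((1 : B) ⊗ₜ[A] k : B ⊗[A] (Fin n → A)) ∈ LinearMap.ker (a.baseChange B) :=
      h2 h1
    rw [LinearMap.mem_ker, LinearMap.baseChange_tmul] at h3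
    have h4 : (1 : B) ⊗ₜ[A] (a k) = (1 : B) ⊗ₜ[A] (0 : Fin κ →₀ A) := by
      rw [h3, TensorProduct.tmul_zero]
    exact aux_one_tmul_injective hinj (Fin κ) h4
  -- build the splitting of the quotient map
  obtain ⟨s', hs'⟩ := Module.projective_lifting_property K.mkQ y (Submodule.mkQ_surjective K)
  have hsplit : K.mkQ ∘ₗ (s' ∘ₗ K.liftQ a (fun x hx => LinearMap.mem_ker.mpr (haK x hx))) = LinearMap.id := by
    refine (LinearMap.cancel_right (Submodule.mkQ_surjective K)).mp ?_
    refine LinearMap.ext fun x => ?_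
    simp only [LinearMap.coe_comp, Function.comp_apply, LinearMap.id_apply,
      Submodule.mkQ_apply, Submodule.liftQ_apply]
    have h2 : K.mkQ (s' (a x)) = y (a x) := LinearMap.congr_fun hs' (a x)
    rw [Submodule.mkQ_apply] at h2
    rw [h2]
    have h3 := LinearMap.congr_fun hya x
    simp only [LinearMap.coe_comp, Function.comp_apply, Submodule.mkQ_apply] at h3
    exact h3.symm
  haveI : Module.Projective A ((Fin n → A) ⧸ K) :=
    Module.Projective.of_split (s' ∘ₗ K.liftQ a (fun x hx => LinearMap.mem_ker.mpr (haK x hx))) K.mkQ hsplit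
  exact Module.Projective.of_equiv e
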